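/- Under the stated assumptions: (1) for each i the function δ_i := −Σ_{j=1}^N u^j (D_j)^i_i is constant on U; (2) if H_1,…,H_N : U → ℂ are nonvanishing holomorphic functions with ∂_j H_i = −(D_j)^i_i H_i for all i,j, then Σ_{j=1}^N u^j ∂_j H_i = δ_i H_i for all i, and the functions γ^i_j := H_i γ̃^i_j H_j^{−1} (i ≠ j) satisfy Σ_{k=1}^N u^k ∂_k γ^i_j = (δ_i − δ_j − 1) γ^i_j. -/

import Mathlib

/-!
Homogeneity of the metric coefficients and rotation coefficients of a homogeneous flat
F-manifold in canonical coordinates (Proposition 1.11 of Arsie–Buryak–Lorenzoni–Rossi,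
"Semisimple flat F-manifolds in higher genus").
-/

noncomputable section

variable {N : ℕ}

/-- The partial derivative `∂_k = ∂/∂u^k` of a function of `N` complex variables. -/
def pder (k : Fin N) (f : (Fin N → ℂ) → ℂ) : (Fin N → ℂ) → ℂ :=
  fun u => fderiv ℂ f u (Pi.single k 1)

/-- Kronecker delta. -/
def kron (i j : Fin N) : ℂ := if i = j then 1 else 0

/-- The matrices `M_k` with `(M_k)^i_j = (D_k)^i_j + γ̃^i_j (δ_{kj} − δ_{ki})`, where `D_k` is
diagonal with entries `D k i` and `γ̃` has vanishing diagonal. -/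
def Mmat (D : Fin N → Fin N → (Fin N → ℂ) → ℂ) (γ : Fin N → Fin N → (Fin N → ℂ) → ℂ)
    (k i j : Fin N) : (Fin N → ℂ) → ℂ :=
  fun u => (if i = j then D k i u else 0) + γ i j u * (kron k j - kron k i)

/-- The matrix `B = Σ_i u^i M_i` (the canonical-coordinate form of `i_E M`). -/
def Bmat (D : Fin N → Fin N → (Fin N → ℂ) → ℂ) (γ : Fin N → Fin N → (Fin N → ℂ) → ℂ)
    (i j : Fin N) : (Fin N → ℂ) → ℂ :=
  fun u => ∑ k, u k * Mmat D γ k i j u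

-- === auxiliary lemmas ===
lemma kron_self (i : Fin N) : kron i i = 1 := if_pos rfl
lemma kron_ne {i j : Fin N} (h : i ≠ j) : kron i j = 0 := if_neg h

lemma sum_mul_kron (f : Fin N → ℂ) (a : Fin N) : ∑ k, f k * kron k a = f a := by
  simp [kron, mul_ite, Finset.sum_ite_eq']

lemma sum_kron_mul (a : Fin N) (A : ℂ) : ∑ m, kron m a * A = A := by
  simp [kron, ite_mul, Finset.sum_ite_eq']

lemma sum_kron_split (f : Fin N → ℂ) (i j : Fin N) (A B : ℂ) :
    ∑ m, (f m + kron m i * A + kron m j * B) = (∑ m, f m) + A + B := by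
  rw [Finset.sum_add_distrib, Finset.sum_add_distrib, sum_kron_mul, sum_kron_mul]

lemma sum_kron_split2 (f : Fin N → ℂ) (k i j : Fin N) (A B : ℂ) :
    ∑ m, (f m * kron k m + kron m i * A + kron m j * B) = f k + A + B := by
  rw [Finset.sum_add_distrib, Finset.sum_add_distrib, sum_kron_mul, sum_kron_mul]
  congr 1
  simp [kron, mul_ite, Finset.sum_ite_eq]

lemma single_eq_kron (k l : Fin N) : (Pi.single k 1 : Fin N → ℂ) l = kron l k := by
  simp [Pi.single_apply, kron]

lemma pder_hasFDerivAt {f : (Fin N → ℂ) → ℂ} {L : (Fin N → ℂ) →L[ℂ] ℂ} {u : Fin N → ℂ}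
    (h : HasFDerivAt f L u) (k : Fin N) : pder k f u = L (Pi.single k 1) := by
  simp only [pder]; rw [h.fderiv]

section
variable {D γ : Fin N → Fin N → (Fin N → ℂ) → ℂ} {u : Fin N → ℂ}

lemma Mmat_apply (k a b : Fin N) (u : Fin N → ℂ) :
    Mmat D γ k a b u = (if a = b then D k a u else 0) + γ a b u * (kron k b - kron k a) := rfl

lemma Bmat_apply (a b : Fin N) (u : Fin N → ℂ) :
    Bmat D γ a b u = (if a = b then ∑ l, u l * D l a u else 0) + γ a b u * (u b - u a) := by
  show (∑ l, u l * Mmat D γ l a b u) = _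
  rw [Finset.sum_congr rfl (fun l _ => show u l * Mmat D γ l a b u
      = (if a = b then u l * D l a u else 0)
        + (γ a b u * (u l * kron l b) - γ a b u * (u l * kron l a)) from by
    by_cases h : a = b <;> simp [Mmat_apply, h] <;> ring)]
  rw [Finset.sum_add_distrib, Finset.sum_sub_distrib, ← Finset.mul_sum, ← Finset.mul_sum,
    sum_mul_kron, sum_mul_kron]
  by_cases h : a = b <;> simp [h] <;> ring

lemma hasFDerivAt_Mmat {l a b : Fin N}
    (hD : DifferentiableAt ℂ (D l a) u) (hγ : DifferentiableAt ℂ (γ a b) u) :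
    HasFDerivAt (Mmat D γ l a b)
      ((if a = b then fderiv ℂ (D l a) u else 0) + (kron l b - kron l a) • fderiv ℂ (γ a b) u)
      u := by
  by_cases h : a = b
  · have hfn : Mmat D γ l a b = fun w => D l a w + γ a b w * (kron l b - kron l a) := by
      funext w; rw [Mmat_apply, if_pos h]
    rw [hfn, if_pos h]
    exact hD.hasFDerivAt.add (hγ.hasFDerivAt.mul_const _)
  · have hfn : Mmat D γ l a b = fun w => γ a b w * (kron l b - kron l a) := by
      funext w; rw [Mmat_apply, if_neg h, zero_add]
    rw [hfn, if_neg h, zero_add]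
    exact hγ.hasFDerivAt.mul_const _

lemma pder_Mmat {l a b : Fin N} (k : Fin N)
    (hD : DifferentiableAt ℂ (D l a) u) (hγ : DifferentiableAt ℂ (γ a b) u) :
    pder k (Mmat D γ l a b) u
      = (if a = b then pder k (D l a) u else 0) + (kron l b - kron l a) * pder k (γ a b) u := by
  rw [pder_hasFDerivAt (hasFDerivAt_Mmat hD hγ) k]
  simp only [ContinuousLinearMap.add_apply, ContinuousLinearMap.smul_apply, smul_eq_mul,
    apply_ite (fun L : (Fin N → ℂ) →L[ℂ] ℂ => L (Pi.single k 1)), ContinuousLinearMap.zero_apply]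
  rfl

lemma pder_Bmat {a b : Fin N} (k : Fin N)
    (hD : ∀ l, DifferentiableAt ℂ (D l a) u) (hγ : DifferentiableAt ℂ (γ a b) u) :
    pder k (Bmat D γ a b) u = Mmat D γ k a b u + ∑ l, u l * pder k (Mmat D γ l a b) u := by
  have hM : ∀ l : Fin N, HasFDerivAt (Mmat D γ l a b) (fderiv ℂ (Mmat D γ l a b) u) u :=
    fun l => ((hasFDerivAt_Mmat (hD l) hγ).differentiableAt).hasFDerivAt
  have h : HasFDerivAt (Bmat D γ a b)
      (∑ l, (u l • fderiv ℂ (Mmat D γ l a b) u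
        + Mmat D γ l a b u • (ContinuousLinearMap.proj l : (Fin N → ℂ) →L[ℂ] ℂ))) u := by
    have hb : Bmat D γ a b = fun w => ∑ l, w l * Mmat D γ l a b w := rfl
    rw [hb]
    apply HasFDerivAt.fun_sum
    intro l _
    have hp : HasFDerivAt (fun w : Fin N → ℂ => w l)
        (ContinuousLinearMap.proj l : (Fin N → ℂ) →L[ℂ] ℂ) u :=
      (ContinuousLinearMap.proj l : (Fin N → ℂ) →L[ℂ] ℂ).hasFDerivAt
    exact hp.mul (hM l)
  rw [pder_hasFDerivAt h k]
  simp only [ContinuousLinearMap.sum_apply, ContinuousLinearMap.add_apply,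
    ContinuousLinearMap.smul_apply, smul_eq_mul, ContinuousLinearMap.proj_apply]
  rw [Finset.sum_add_distrib]
  simp only [single_eq_kron]
  rw [sum_mul_kron (fun l => Mmat D γ l a b u) k, add_comm]
  rfl

end

lemma const_of_pder_zero {U : Set (Fin N → ℂ)} (hU : IsOpen U) (hconn : IsConnected U)
    {f : (Fin N → ℂ) → ℂ} (hdiff : DifferentiableOn ℂ f U)
    (hz : ∀ u ∈ U, ∀ k, pder k f u = 0) : ∀ u ∈ U, ∀ v ∈ U, f u = f v := by
  have hfz : ∀ u ∈ U, fderiv ℂ f u = 0 := by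
    intro u hu
    apply ContinuousLinearMap.ext
    intro v
    have hv : v = ∑ k, v k • (Pi.single k 1 : Fin N → ℂ) := by
      funext l
      simp [Finset.sum_apply, Pi.single_apply]
    rw [hv, map_sum]
    simp only [map_smul]
    have h0 : ∀ k : Fin N, fderiv ℂ f u (Pi.single k 1) = 0 := fun k => hz u hu k
    simp [h0]
  have hloc : ∀ x ∈ U, ∃ ε > 0, Metric.ball x ε ⊆ U ∧ ∀ y ∈ Metric.ball x ε, f y = f x := by
    intro x hx
    obtain ⟨ε, hε, hball⟩ := Metric.isOpen_iff.mp hU x hx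
    refine ⟨ε, hε, hball, fun y hy => ?_⟩
    exact (convex_ball x ε).is_const_of_fderivWithin_eq_zero (hdiff.mono hball)
      (fun z hz' => by
        rw [fderivWithin_of_isOpen Metric.isOpen_ball hz']
        exact hfz z (hball hz')) hy (Metric.mem_ball_self hε)
  intro u hu v hv
  have hAopen : IsOpen {x | x ∈ U ∧ f x = f u} := by
    rw [Metric.isOpen_iff]
    rintro x ⟨hxU, hxf⟩
    obtain ⟨ε, hε, hball, hconst⟩ := hloc x hxU
    exact ⟨ε, hε, fun y hy => ⟨hball hy, by rw [hconst y hy, hxf]⟩⟩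
  have hBopen : IsOpen {x | x ∈ U ∧ f x ≠ f u} := by
    rw [Metric.isOpen_iff]
    rintro x ⟨hxU, hxf⟩
    obtain ⟨ε, hε, hball, hconst⟩ := hloc x hxU
    exact ⟨ε, hε, fun y hy => ⟨hball hy, by rw [hconst y hy]; exact hxf⟩⟩
  have hdisj : Disjoint {x | x ∈ U ∧ f x = f u} {x | x ∈ U ∧ f x ≠ f u} :=
    Set.disjoint_left.mpr fun x hxA hxB => hxB.2 hxA.2
  have hsub : U ⊆ {x | x ∈ U ∧ f x = f u} ∪ {x | x ∈ U ∧ f x ≠ f u} := fun x hx => by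
    by_cases h : f x = f u
    · exact Or.inl ⟨hx, h⟩
    · exact Or.inr ⟨hx, h⟩
  have hA' : U ⊆ {x | x ∈ U ∧ f x = f u} :=
    hconn.isPreconnected.subset_left_of_subset_union hAopen hBopen hdisj hsub
      ⟨u, hu, hu, rfl⟩
  exact ((hA' hv).2).symm
/-- Under the flatness equations for `M = D̃ + [Γ̃,dU]` and the homogeneity
equations `∂_k B + B M_k − M_k B = 0` for `B = Σ_i u^i M_i`:
(1) each `δ_i := −Σ_j u^j (D_j)^i_i` is constant on `U`;
(2) for nonvanishing `H_i` with `∂_j H_i = −(D_j)^i_i H_i` one has the Euler homogeneity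
`Σ_j u^j ∂_j H_i = δ_i H_i`, and the rotation coefficients `γ^i_j = H_i γ̃^i_j H_j^{−1}`
satisfy `Σ_k u^k ∂_k γ^i_j = (δ_i − δ_j − 1) γ^i_j`. -/
theorem statement9 {N : ℕ} (hN : 2 ≤ N) (U : Set (Fin N → ℂ))
    (hU : IsOpen U) (hconn : IsConnected U)
    (D : Fin N → Fin N → (Fin N → ℂ) → ℂ)
    (γ : Fin N → Fin N → (Fin N → ℂ) → ℂ)
    (hDhol : ∀ k i : Fin N, DifferentiableOn ℂ (D k i) U)
    (hγhol : ∀ i j : Fin N, DifferentiableOn ℂ (γ i j) U)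
    (hγdiag : ∀ i : Fin N, ∀ u, γ i i u = 0)
    -- flatness: ∂_k M_l − ∂_l M_k = M_k M_l − M_l M_k
    (hflat : ∀ k l i j : Fin N, ∀ u ∈ U,
        pder k (Mmat D γ l i j) u - pder l (Mmat D γ k i j) u
          = ∑ m, (Mmat D γ k i m u * Mmat D γ l m j u
              - Mmat D γ l i m u * Mmat D γ k m j u))
    -- homogeneity: ∂_k B + B M_k − M_k B = 0
    (hB : ∀ k i j : Fin N, ∀ u ∈ U,
        pder k (Bmat D γ i j) u
          + ∑ m, (Bmat D γ i m u * Mmat D γ k m j u - Mmat D γ k i m u * Bmat D γ m j u)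
          = 0) :
    ∃ δ : Fin N → ℂ,
      -- (1) δ_i = −Σ_j u^j (D_j)^i_i is constant on U
      (∀ i : Fin N, ∀ u ∈ U, -∑ j, u j * D j i u = δ i) ∧
      -- (2) properties of H and of the rotation coefficients
      (∀ H : Fin N → (Fin N → ℂ) → ℂ,
        (∀ i : Fin N, DifferentiableOn ℂ (H i) U) →
        (∀ i : Fin N, ∀ u ∈ U, H i u ≠ 0) →
        (∀ i j : Fin N, ∀ u ∈ U, pder j (H i) u = -(D j i u) * H i u) →
        ((∀ i : Fin N, ∀ u ∈ U, ∑ j, u j * pder j (H i) u = δ i * H i u) ∧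
         (∀ i j : Fin N, i ≠ j → ∀ u ∈ U,
            ∑ k, u k * pder k (fun w => H i w * γ i j w / H j w) u
              = (δ i - δ j - 1) * (H i u * γ i j u / H j u)))) := by
  clear hN
  obtain ⟨u₀, hu₀⟩ := hconn.nonempty
  have hDd : ∀ (k i : Fin N) {u : Fin N → ℂ}, u ∈ U → DifferentiableAt ℂ (D k i) u :=
    fun k i _ hu => (hDhol k i).differentiableAt (hU.mem_nhds hu)
  have hγd : ∀ (i j : Fin N) {u : Fin N → ℂ}, u ∈ U → DifferentiableAt ℂ (γ i j) u :=
    fun i j _ hu => (hγhol i j).differentiableAt (hU.mem_nhds hu)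
  -- Part (1): the diagonal of B has vanishing partial derivatives
  have hpder0 : ∀ i : Fin N, ∀ u ∈ U, ∀ k : Fin N,
      pder k (fun w => ∑ l, w l * D l i w) u = 0 := by
    intro i u hu k
    have h := hB k i i u hu
    have hterm : ∀ m ∈ Finset.univ,
        Bmat D γ i m u * Mmat D γ k m i u - Mmat D γ k i m u * Bmat D γ m i u = 0 := by
      intro m _
      by_cases hmi : m = i
      · subst hmi; ring
      · have h1 : i ≠ m := Ne.symm hmi
        simp only [Bmat_apply, Mmat_apply, if_neg hmi, if_neg h1]
        ring
    rw [Finset.sum_congr rfl hterm] at h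
    simp only [Finset.sum_const_zero, add_zero] at h
    have hBii : Bmat D γ i i = fun w => ∑ l, w l * D l i w := by
      funext w; simp [Bmat, Mmat, sub_self]
    rwa [hBii] at h
  have hconst : ∀ i : Fin N, ∀ u ∈ U, (∑ l, u l * D l i u) = (∑ l, u₀ l * D l i u₀) := by
    intro i u hu
    have hdf : DifferentiableOn ℂ (fun w => ∑ l, w l * D l i w) U := by
      apply DifferentiableOn.fun_sum
      intro l _
      exact ((ContinuousLinearMap.proj l :
        (Fin N → ℂ) →L[ℂ] ℂ).differentiable.differentiableOn).mul (hDhol l i)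
    simpa using const_of_pder_zero hU hconn hdf (hpder0 i) u hu u₀ hu₀
  refine ⟨fun i => -(∑ l, u₀ l * D l i u₀), fun i u hu => by rw [hconst i u hu], ?_⟩
  intro H hHdiff hHne hHder
  constructor
  · -- (2a)
    intro i u hu
    rw [Finset.sum_congr rfl (fun l (_ : l ∈ Finset.univ) => show
        u l * pder l (H i) u = (u l * D l i u) * (-(H i u)) from by
      rw [hHder i l u hu]; ring)]
    rw [← Finset.sum_mul, hconst i u hu]
    ring
  · -- (2b)
    intro i j hij u hu
    have hij' : j ≠ i := Ne.symm hij
    -- EqStar from flatness (k,l) = (i,j), entry (i,j)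
    have hstar : pder i (γ i j) u + pder j (γ i j) u
        = (D i i u + D j i u) * γ i j u - (D j j u + D i j u) * γ i j u
          - (∑ m, γ i m u * γ m j u) := by
      have h := hflat i j i j u hu
      rw [pder_Mmat i (hDd j i hu) (hγd i j hu), pder_Mmat j (hDd i i hu) (hγd i j hu)] at h
      simp only [if_neg hij, kron_self, kron_ne hij, kron_ne hij'] at h
      have hterm : ∀ m ∈ Finset.univ,
          Mmat D γ i i m u * Mmat D γ j m j u - Mmat D γ j i m u * Mmat D γ i m j u
            = -(γ i m u * γ m j u) + kron m i * ((D i i u + D j i u) * γ i j u)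
              + kron m j * (-((D j j u + D i j u) * γ i j u)) := by
        intro m _
        by_cases hmi : m = i
        · subst hmi
          simp [Mmat_apply, kron, hij, hij', hγdiag]
          try ring
        · by_cases hmj : m = j
          · subst hmj
            simp [Mmat_apply, kron, hij, hij', hγdiag]
            try ring
          · simp [Mmat_apply, kron, hij, hij', hmi, hmj, Ne.symm hmi, Ne.symm hmj, hγdiag]
            try ring
      rw [Finset.sum_congr rfl hterm,
        sum_kron_split (fun m => -(γ i m u * γ m j u)) i j _ _, Finset.sum_neg_distrib] at h
      linear_combination h
    -- EqK from flatness (k,l) = (k,j) with k ∉ {i,j}, entry (i,j)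
    have hK : ∀ k : Fin N, k ≠ i → k ≠ j → pder k (γ i j) u
        = γ i k u * γ k j u + (D k i u - D k j u) * γ i j u := by
      intro k hki hkj
      have h := hflat k j i j u hu
      rw [pder_Mmat k (hDd j i hu) (hγd i j hu), pder_Mmat j (hDd k i hu) (hγd i j hu)] at h
      simp only [if_neg hij, kron_self, kron_ne hij', kron_ne hki, kron_ne hkj] at h
      have hterm : ∀ m ∈ Finset.univ,
          Mmat D γ k i m u * Mmat D γ j m j u - Mmat D γ j i m u * Mmat D γ k m j u
            = (γ i m u * γ m j u) * kron k m + kron m i * (D k i u * γ i j u)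
              + kron m j * (-(D k j u * γ i j u)) := by
        intro m _
        by_cases hmi : m = i
        · subst hmi
          simp [Mmat_apply, kron, hij, hij', hki, hkj, Ne.symm hki, Ne.symm hkj, hγdiag]
          try ring
        · by_cases hmj : m = j
          · subst hmj
            simp [Mmat_apply, kron, hij, hij', hki, hkj, Ne.symm hki, Ne.symm hkj, hγdiag]
            try ring
          · simp [Mmat_apply, kron, hij, hij', hki, hkj, hmi, hmj,
              Ne.symm hmi, Ne.symm hmj, hγdiag]
            try ring
      rw [Finset.sum_congr rfl hterm,
        sum_kron_split2 (fun m => γ i m u * γ m j u) k i j _ _] at h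
      linear_combination h
    -- EqB from hB with k = j, entry (i,j)
    have hpB : pder j (Bmat D γ i j) u = γ i j u + pder j (γ i j) u * (u j - u i) := by
      rw [pder_Bmat j (fun l => hDd l i hu) (hγd i j hu)]
      have h1 : Mmat D γ j i j u = γ i j u := by
        rw [Mmat_apply, if_neg hij, kron_self, kron_ne hij']; ring
      rw [h1]
      rw [Finset.sum_congr rfl (fun l (_ : l ∈ Finset.univ) => show
          u l * pder j (Mmat D γ l i j) u
            = pder j (γ i j) u * (u l * kron l j) - pder j (γ i j) u * (u l * kron l i) from by
        rw [pder_Mmat j (hDd l i hu) (hγd i j hu), if_neg hij]; ring)]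
      rw [Finset.sum_sub_distrib, ← Finset.mul_sum, ← Finset.mul_sum, sum_mul_kron, sum_mul_kron]
      ring
    have hBeq : γ i j u + pder j (γ i j) u * (u j - u i)
        + ((∑ m, γ i m u * γ m j u * (u m - u i))
          + ((∑ l, u l * D l i u) * γ i j u - D j i u * (γ i j u * (u j - u i)))
          + (D j j u * (γ i j u * (u j - u i)) - (∑ l, u l * D l j u) * γ i j u)) = 0 := by
      have h := hB j i j u hu
      rw [hpB] at h
      have hterm : ∀ m ∈ Finset.univ,
          Bmat D γ i m u * Mmat D γ j m j u - Mmat D γ j i m u * Bmat D γ m j u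
            = γ i m u * γ m j u * (u m - u i)
              + kron m i * ((∑ l, u l * D l i u) * γ i j u
                  - D j i u * (γ i j u * (u j - u i)))
              + kron m j * (D j j u * (γ i j u * (u j - u i))
                  - (∑ l, u l * D l j u) * γ i j u) := by
        intro m _
        by_cases hmi : m = i
        · subst hmi
          simp [Bmat_apply, Mmat_apply, kron, hij, hij', hγdiag]
          try ring
        · by_cases hmj : m = j
          · subst hmj
            simp [Bmat_apply, Mmat_apply, kron, hij, hij', hγdiag]
            try ring
          · simp [Bmat_apply, Mmat_apply, kron, hij, hij', hmi, hmj,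
              Ne.symm hmi, Ne.symm hmj, hγdiag]
            try ring
      rw [Finset.sum_congr rfl hterm,
        sum_kron_split (fun m => γ i m u * γ m j u * (u m - u i)) i j _ _] at h
      linear_combination h
    -- Euler identity for γ i j : ∑ u^k ∂_k γ̃ = -γ̃
    have hsplit : (∑ m, γ i m u * γ m j u * (u m - u i))
        = (∑ m, u m * (γ i m u * γ m j u)) - (∑ m, γ i m u * γ m j u) * u i := by
      rw [Finset.sum_congr rfl (fun m (_ : m ∈ Finset.univ) => show
          γ i m u * γ m j u * (u m - u i)
            = u m * (γ i m u * γ m j u) - γ i m u * γ m j u * u i from by ring),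
        Finset.sum_sub_distrib, ← Finset.sum_mul]
    rw [hsplit] at hBeq
    have hS : (∑ k, u k * pder k (γ i j) u) = -(γ i j u) := by
      have hZ : ∀ k ∈ Finset.univ, u k * pder k (γ i j) u
          = (u k * (γ i k u * γ k j u) + (u k * D k i u - u k * D k j u) * γ i j u)
            + kron k i * (u i * (pder i (γ i j) u
                - (γ i i u * γ i j u + (D i i u - D i j u) * γ i j u)))
            + kron k j * (u j * (pder j (γ i j) u
                - (γ i j u * γ j j u + (D j i u - D j j u) * γ i j u))) := by
        intro k _
        by_cases hki : k = i
        · subst hki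
          rw [kron_self, kron_ne hij]
          ring
        · by_cases hkj : k = j
          · subst hkj
            rw [kron_ne hij', kron_self]
            ring
          · rw [kron_ne hki, kron_ne hkj, hK k hki hkj]
            ring
      rw [Finset.sum_congr rfl hZ, sum_kron_split _ i j _ _, Finset.sum_add_distrib,
        ← Finset.sum_mul, Finset.sum_sub_distrib]
      linear_combination (u i) * hstar + hBeq - (u i * γ i j u) * (hγdiag i u)
        - (u j * γ i j u) * (hγdiag j u)
    -- now compute the derivative of H i * γ i j / H j
    have hne : H j u ≠ 0 := hHne j u hu
    have hHi : DifferentiableAt ℂ (H i) u := (hHdiff i).differentiableAt (hU.mem_nhds hu)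
    have hHj : DifferentiableAt ℂ (H j) u := (hHdiff j).differentiableAt (hU.mem_nhds hu)
    have hinv : HasFDerivAt (fun w => (H j w)⁻¹)
        ((-(H j u ^ 2)⁻¹) • fderiv ℂ (H j) u) u := by
      have h1 : HasDerivAt (fun y : ℂ => y⁻¹) (-(H j u ^ 2)⁻¹) (H j u) := hasDerivAt_inv hne
      simpa [Function.comp_def] using h1.comp_hasFDerivAt u hHj.hasFDerivAt
    have hmul : HasFDerivAt (fun w => H i w * γ i j w)
        (H i u • fderiv ℂ (γ i j) u + γ i j u • fderiv ℂ (H i) u) u :=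
      hHi.hasFDerivAt.mul (hγd i j hu).hasFDerivAt
    have hφ : HasFDerivAt (fun w => H i w * γ i j w / H j w)
        ((H i u * γ i j u) • ((-(H j u ^ 2)⁻¹) • fderiv ℂ (H j) u)
          + (H j u)⁻¹ • (H i u • fderiv ℂ (γ i j) u + γ i j u • fderiv ℂ (H i) u)) u := by
      simpa [div_eq_mul_inv] using hmul.fun_mul hinv
    have hpphi : ∀ k : Fin N, pder k (fun w => H i w * γ i j w / H j w) u
        = (H i u * γ i j u) * (-(H j u ^ 2)⁻¹) * pder k (H j) u
          + (H j u)⁻¹ * (H i u * pder k (γ i j) u + γ i j u * pder k (H i) u) := by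
      intro k
      rw [pder_hasFDerivAt hφ k]
      simp only [ContinuousLinearMap.add_apply, ContinuousLinearMap.smul_apply, smul_eq_mul,
        pder]
      ring
    rw [Finset.sum_congr rfl (fun k (_ : k ∈ Finset.univ) => show
        u k * pder k (fun w => H i w * γ i j w / H j w) u
          = ((H i u * γ i j u) * (H j u ^ 2)⁻¹ * (H j u)) * (u k * D k j u)
            + (-((H j u)⁻¹ * γ i j u * H i u)) * (u k * D k i u)
            + ((H j u)⁻¹ * H i u) * (u k * pder k (γ i j) u) from by
      rw [hpphi k, hHder j k u hu, hHder i k u hu]; ring)]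
    rw [Finset.sum_add_distrib, Finset.sum_add_distrib, ← Finset.mul_sum, ← Finset.mul_sum,
      ← Finset.mul_sum, hS, hconst i u hu, hconst j u hu]
    have hpow : (H j u ^ 2)⁻¹ = (H j u)⁻¹ * (H j u)⁻¹ := by rw [sq, mul_inv]
    rw [hpow]
    field_simp
    ring

end
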